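/- Let A be the r×r matrix over F = ℚ[x]/(x^N+1) with A(i,j) = x^{u_i} δ_{i−1 mod r, j}. Then the multiplicative order of A (in GL_r(F)) equals r times the multiplicative order of x^{u_0 + ⋯ + u_{r−1}} in F. -/

import Mathlib

open Polynomial
open Fin.NatCast

/-- The base ring `F = ℚ[x]/(x^N + 1)`. -/
noncomputable abbrev Fq (N : ℕ) : Type :=
  Polynomial ℚ ⧸ Ideal.span ({X ^ N + 1} : Set (Polynomial ℚ))

/-- The class of `x` in `F`. -/
noncomputable def xq (N : ℕ) : Fq N :=
  Ideal.Quotient.mk (Ideal.span ({X ^ N + 1} : Set (Polynomial ℚ))) X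

lemma xq_pow_add_one (N : ℕ) : xq N ^ N + 1 = 0 := by
  have h : xq N ^ N + 1 = (Ideal.Quotient.mk (Ideal.span ({X ^ N + 1} : Set (Polynomial ℚ))))
      (X ^ N + 1) := by
    rw [xq, ← map_pow, map_add, map_one]
  rw [h, Ideal.Quotient.eq_zero_iff_mem]
  exact Ideal.mem_span_singleton_self _

lemma fq_nontrivial (N : ℕ) (hN : 0 < N) : Nontrivial (Fq N) := by
  apply Ideal.Quotient.nontrivial_iff.mpr
  rw [Ne, Ideal.span_singleton_eq_top]
  apply Polynomial.not_isUnit_of_degree_pos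
  have : (X ^ N + 1 : Polynomial ℚ) = X ^ N + C 1 := by simp
  rw [this, Polynomial.degree_X_pow_add_C hN]
  exact_mod_cast hN

lemma A_pow_apply (N r : ℕ) [NeZero r] (u : Fin r → ℕ)
    (A : Matrix (Fin r) (Fin r) (Fq N))
    (hA : ∀ i j, A i j = if j = i - 1 then xq N ^ u i else 0)
    (m : ℕ) (i j : Fin r) :
    (A ^ m) i j = if j = i - (m : Fin r) then
      xq N ^ (∑ t ∈ Finset.range m, u (i - (t : Fin r))) else 0 := by
  induction m generalizing i j with
  | zero => simp [Matrix.one_apply, eq_comm]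
  | succ m ih =>
    rw [pow_succ', Matrix.mul_apply]
    have hterm : ∀ k, A i k * (A ^ m) k j
        = if k = i - 1 then xq N ^ u i * (A ^ m) k j else 0 := by
      intro k; rw [hA]; split <;> simp
    rw [Finset.sum_congr rfl (fun k _ => hterm k), Finset.sum_ite_eq']
    simp only [Finset.mem_univ, if_true]
    rw [ih]
    have hc : i - 1 - (m : Fin r) = i - ((m + 1 : ℕ) : Fin r) := by
      push_cast; open Fin.CommRing in ring
    have he : u i + ∑ t ∈ Finset.range m, u (i - 1 - (t : Fin r))
        = ∑ t ∈ Finset.range (m + 1), u (i - (t : Fin r)) := by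
      rw [Finset.sum_range_succ']
      simp only [Nat.cast_zero, sub_zero]
      rw [add_comm]
      congr 1
      refine Finset.sum_congr rfl fun t _ => ?_
      congr 1
      push_cast; open Fin.CommRing in ring
    rw [hc]
    simp only [mul_ite, mul_zero, ← pow_add, he]

lemma sum_period (r : ℕ) [NeZero r] (u : Fin r → ℕ) (k : ℕ) (i : Fin r) :
    ∑ t ∈ Finset.range (r * k), u (i - (t : Fin r)) = k * ∑ j, u j := by
  induction k with
  | zero => simp
  | succ k ih =>
    rw [Nat.mul_succ, Finset.sum_range_add, ih]
    have h1 : ∀ t : ℕ, ((r * k + t : ℕ) : Fin r) = (t : Fin r) := by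
      intro t; push_cast; simp [Fin.natCast_self]
    have h2 : ∑ t ∈ Finset.range r, u (i - ((r * k + t : ℕ) : Fin r))
        = ∑ j, u j := by
      simp only [h1]
      rw [← Fin.sum_univ_eq_sum_range (fun t => u (i - (t : Fin r))) r]
      simp only [Fin.cast_val_eq_self]
      exact Fintype.sum_equiv (Equiv.subLeft i) _ _ (fun j => by simp)
    rw [h2]; ring

/-- Lemma 4 (equation 24): for `A(i,j) = x^{u_i} δ_{i−1 mod r, j}`, the
multiplicative order of `A` equals `r` times the order of `x^{u_0+⋯+u_{r−1}}`. -/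
theorem stmt_8 (N r : ℕ) (hN : 0 < N) [NeZero r] (u : Fin r → ℕ)
    (A : Matrix (Fin r) (Fin r) (Fq N))
    (hA : ∀ i j, A i j = if j = i - 1 then xq N ^ u i else 0) :
    orderOf A = r * orderOf (xq N ^ (∑ i, u i)) := by
  haveI := fq_nontrivial N hN
  have hr0 : 0 < r := Nat.pos_of_ne_zero (NeZero.ne r)
  set S : ℕ := ∑ i, u i with hS
  set d : ℕ := orderOf (xq N ^ S) with hd
  -- x^S has finite order since x^(2N) = 1
  have hxN : xq N ^ N = -1 := eq_neg_of_add_eq_zero_left (xq_pow_add_one N)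
  have hx2N : (xq N ^ S) ^ (2 * N) = 1 := by
    rw [← pow_mul]
    have h : S * (2 * N) = N * (2 * S) := by ring
    rw [h, pow_mul, hxN]
    rw [pow_mul]
    norm_num
  have hd0 : d ≠ 0 := by
    have hfin : IsOfFinOrder (xq N ^ S) :=
      isOfFinOrder_iff_pow_eq_one.mpr ⟨2 * N, by positivity, hx2N⟩
    exact (orderOf_pos_iff.mpr hfin).ne'
  -- characterization of A^m = 1
  have key : ∀ m : ℕ, A ^ m = 1 ↔ r ∣ m ∧ (xq N ^ S) ^ (m / r) = 1 := by
    intro m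
    constructor
    · intro hm
      have h00 := congrFun (congrFun hm 0) 0
      rw [A_pow_apply N r u A hA, Matrix.one_apply_eq] at h00
      have hrm : r ∣ m := by
        by_contra hc
        have hm0 : ((m : ℕ) : Fin r) ≠ 0 := fun h => hc (Fin.natCast_eq_zero.mp h)
        rw [if_neg] at h00
        · exact zero_ne_one h00
        · intro h
          apply hm0
          rw [zero_sub, eq_comm, neg_eq_zero] at h
          exact h
      refine ⟨hrm, ?_⟩
      obtain ⟨k, hk⟩ := hrm
      have hk' : m / r = k := by rw [hk, Nat.mul_div_cancel_left k hr0]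
      rw [hk']
      have hm0 : ((m : ℕ) : Fin r) = 0 := Fin.natCast_eq_zero.mpr ⟨k, hk⟩
      rw [if_pos (by rw [hm0, sub_zero])] at h00
      rw [hk, sum_period r u k 0, ← hS, mul_comm, pow_mul] at h00
      exact h00
    · rintro ⟨⟨k, hk⟩, hpow⟩
      have hk' : m / r = k := by rw [hk, Nat.mul_div_cancel_left k hr0]
      rw [hk'] at hpow
      ext i j
      rw [A_pow_apply N r u A hA, Matrix.one_apply]
      have hm0 : ((m : ℕ) : Fin r) = 0 := Fin.natCast_eq_zero.mpr ⟨k, hk⟩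
      rw [hm0, sub_zero, hk, sum_period r u k i, ← hS, mul_comm, pow_mul, hpow]
      simp [eq_comm]
  -- conclude
  have h1 : A ^ (r * d) = 1 := by
    rw [key]
    exact ⟨Dvd.intro d rfl, by rw [Nat.mul_div_cancel_left d hr0]; exact pow_orderOf_eq_one _⟩
  have h2 : orderOf A ∣ r * d := orderOf_dvd_of_pow_eq_one h1
  have hne : orderOf A ≠ 0 := by
    intro h
    rw [h] at h2
    exact mul_ne_zero hr0.ne' hd0 (Nat.eq_zero_of_zero_dvd h2)
  obtain ⟨⟨q, hq⟩, hpow⟩ := (key (orderOf A)).mp (pow_orderOf_eq_one A)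
  rw [hq, Nat.mul_div_cancel_left q hr0] at hpow
  have hdq : d ∣ q := orderOf_dvd_of_pow_eq_one hpow
  exact Nat.dvd_antisymm h2 (by rw [hq]; exact mul_dvd_mul_left r hdq)
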